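/- Let n ≥ 3, μ_m ∈ [0,1), and let p_1, …, p_n, e : ℝ → ℝ² have derivatives at time t with p_i(t) ≠ e(t) for all i and ‖e'(t)‖ ≤ μ_m. Suppose two distinct indices j, k satisfy p_j(t) ≠ p_k(t) and e(t) = p_j(t) + λ·(p_k(t) − p_j(t)) for some λ ∈ (0,1), and the active pursuers use the edge strategy p_j'(t) = R_{φ_j}((e(t) − p_j(t))/‖e(t) − p_j(t)‖) and p_k'(t) = R_{φ_k}^T((e(t) − p_k(t))/‖e(t) − p_k(t)‖) with φ_j, φ_k ∈ [arcsin μ_m, π/2 − arcsin(1 − μ_m)], while every other pursuer follows pure pursuit p_i'(t) = (e(t) − p_i(t))/‖e(t) − p_i(t)‖. Then V(t) = Σ_{i=1}^n ‖p_i(t) − e(t)‖ is differentiable at t with V'(t) ≤ −n·(1 − μ_m). (Edge-phase Lyapunov bound of Theorem 2.) -/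

import Mathlib

open Real

noncomputable section

/-- The vector `(a, b)` in the Euclidean plane. -/
def vec2 (a b : ℝ) : EuclideanSpace ℝ (Fin 2) := (WithLp.equiv 2 (Fin 2 → ℝ)).symm ![a, b]

/-- Signed area `A(a,b,c) = ½·[a₁(b₂−c₂) + b₁(c₂−a₂) + c₁(a₂−b₂)]`. -/
def sarea (a b c : EuclideanSpace ℝ (Fin 2)) : ℝ :=
  (1/2) * (a 0 * (b 1 - c 1) + b 0 * (c 1 - a 1) + c 0 * (a 1 - b 1))

/-- `v^⊥ = (−v₂, v₁)`. -/
def perp (v : EuclideanSpace ℝ (Fin 2)) : EuclideanSpace ℝ (Fin 2) := vec2 (-(v 1)) (v 0)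

/-- Planar dot product. -/
def dot2 (u v : EuclideanSpace ℝ (Fin 2)) : ℝ := u 0 * v 0 + u 1 * v 1

/-- Clockwise rotation by `φ`: `R_φ(a,b) = (a cos φ + b sin φ, −a sin φ + b cos φ)`. -/
def rotCW (φ : ℝ) (v : EuclideanSpace ℝ (Fin 2)) : EuclideanSpace ℝ (Fin 2) :=
  vec2 (v 0 * Real.cos φ + v 1 * Real.sin φ) (-(v 0) * Real.sin φ + v 1 * Real.cos φ)

/-- Counterclockwise rotation by `φ` (the transpose `R_φ^T`). -/
def rotCCW (φ : ℝ) (v : EuclideanSpace ℝ (Fin 2)) : EuclideanSpace ℝ (Fin 2) :=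
  vec2 (v 0 * Real.cos φ - v 1 * Real.sin φ) (v 0 * Real.sin φ + v 1 * Real.cos φ)

lemma inner2 (u v : EuclideanSpace ℝ (Fin 2)) : (inner ℝ u v : ℝ) = u 0 * v 0 + u 1 * v 1 := by
  simp [PiLp.inner_apply, RCLike.inner_apply, Fin.sum_univ_two, mul_comm]

lemma smul_apply2 (c : ℝ) (v : EuclideanSpace ℝ (Fin 2)) (i : Fin 2) : (c • v) i = c * v i := rfl

lemma inner_rotCW (φ c : ℝ) (q : EuclideanSpace ℝ (Fin 2)) :
    (inner ℝ q (rotCW φ (c • q)) : ℝ) = c * Real.cos φ * (inner ℝ q q : ℝ) := by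
  rw [inner2, inner2]
  show q 0 * ((c • q) 0 * Real.cos φ + (c • q) 1 * Real.sin φ)
      + q 1 * (-((c • q) 0) * Real.sin φ + (c • q) 1 * Real.cos φ) = _
  simp only [smul_apply2]; ring

lemma inner_rotCCW (φ c : ℝ) (q : EuclideanSpace ℝ (Fin 2)) :
    (inner ℝ q (rotCCW φ (c • q)) : ℝ) = c * Real.cos φ * (inner ℝ q q : ℝ) := by
  rw [inner2, inner2]
  show q 0 * ((c • q) 0 * Real.cos φ - (c • q) 1 * Real.sin φ)
      + q 1 * ((c • q) 0 * Real.sin φ + (c • q) 1 * Real.cos φ) = _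
  simp only [smul_apply2]; ring

lemma cos_lb {μm φ : ℝ} (h0 : 0 ≤ μm) (h1 : μm < 1)
    (hφ : φ ∈ Set.Icc (Real.arcsin μm) (π/2 - Real.arcsin (1 - μm))) :
    1 - μm ≤ Real.cos φ := by
  have ha : 0 ≤ Real.arcsin μm := Real.arcsin_nonneg.2 h0
  have hb : 0 ≤ Real.arcsin (1 - μm) := Real.arcsin_nonneg.2 (by linarith)
  have hφ0 : 0 ≤ φ := le_trans ha hφ.1
  have hyπ : π/2 - Real.arcsin (1 - μm) ≤ π := by
    have := Real.pi_pos; linarith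
  have := Real.cos_le_cos_of_nonneg_of_le_pi hφ0 hyπ hφ.2
  rwa [Real.cos_pi_div_two_sub, Real.sin_arcsin (by linarith) (by linarith)] at this

lemma hasDerivAt_norm_aux {f : ℝ → EuclideanSpace ℝ (Fin 2)} {f' : EuclideanSpace ℝ (Fin 2)}
    {t : ℝ} (hf : HasDerivAt f f' t) (h0 : f t ≠ 0) :
    HasDerivAt (fun s => ‖f s‖) ((inner ℝ (f t) f' : ℝ) / ‖f t‖) t := by
  have hsq : HasDerivAt (fun s => ‖f s‖ ^ 2) (2 * (inner ℝ (f t) f' : ℝ)) t := hf.norm_sq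
  have hpos : (0:ℝ) < ‖f t‖ := norm_pos_iff.2 h0
  have h := hsq.sqrt (by positivity)
  have heq : (fun s => Real.sqrt (‖f s‖ ^ 2)) = fun s => ‖f s‖ := by
    funext s; exact Real.sqrt_sq (norm_nonneg _)
  rw [heq] at h
  convert h using 1
  rw [Real.sqrt_sq (norm_nonneg _)]
  ring


open Real in
/-- Edge-phase Lyapunov bound of Theorem 2: with the evader strictly on the active edge
`p_j p_k`, the active pursuers using the rotated edge strategy with angles in
`[arcsin μ_m, π/2 − arcsin(1 − μ_m)]`, and all other pursuers in pure pursuit,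
`V(t) = Σ_i ‖p_i(t) − e(t)‖` is differentiable at `t` with `V'(t) ≤ −n(1 − μ_m)`. -/
theorem stmt_13 (n : ℕ) (hn : 3 ≤ n) (μm : ℝ) (hμm : μm ∈ Set.Ico (0:ℝ) 1)
    (p : Fin n → ℝ → EuclideanSpace ℝ (Fin 2)) (e : ℝ → EuclideanSpace ℝ (Fin 2))
    (t : ℝ) (e' : EuclideanSpace ℝ (Fin 2))
    (j k : Fin n) (hjk : j ≠ k) (lam φj φk : ℝ)
    (hne : ∀ i, p i t ≠ e t)
    (hpjk : p j t ≠ p k t) (hlam : lam ∈ Set.Ioo (0:ℝ) 1)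
    (heEdge : e t = p j t + lam • (p k t - p j t))
    (hφj : φj ∈ Set.Icc (Real.arcsin μm) (π/2 - Real.arcsin (1 - μm)))
    (hφk : φk ∈ Set.Icc (Real.arcsin μm) (π/2 - Real.arcsin (1 - μm)))
    (hpj : HasDerivAt (p j) (rotCW φj (‖e t - p j t‖⁻¹ • (e t - p j t))) t)
    (hpk : HasDerivAt (p k) (rotCCW φk (‖e t - p k t‖⁻¹ • (e t - p k t))) t)
    (hothers : ∀ i, i ≠ j → i ≠ k →
      HasDerivAt (p i) (‖e t - p i t‖⁻¹ • (e t - p i t)) t)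
    (he : HasDerivAt e e' t) (hbound : ‖e'‖ ≤ μm) :
    ∃ D : ℝ, HasDerivAt (fun s => ∑ i, ‖p i s - e s‖) D t ∧ D ≤ -(n * (1 - μm)) := by

  obtain ⟨hμ0, hμ1⟩ := hμm
  obtain ⟨hl0, hl1⟩ := hlam
  set q : Fin n → EuclideanSpace ℝ (Fin 2) := fun i => p i t - e t with hq
  have hq0 : ∀ i, q i ≠ 0 := fun i => sub_ne_zero.2 (hne i)
  set r : Fin n → ℝ := fun i => ‖q i‖ with hrdef
  have hr : ∀ i, 0 < r i := fun i => norm_pos_iff.2 (hq0 i)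
  have hqq : ∀ i, (inner ℝ (q i) (q i) : ℝ) = r i ^ 2 := fun i => by
    rw [real_inner_self_eq_norm_sq]
  have hrevn : ∀ i, ‖e t - p i t‖ = r i := fun i => by
    rw [show e t - p i t = -(q i) by simp [hq], norm_neg]
  -- the derivative direction of each pursuer
  classical
  set d : Fin n → EuclideanSpace ℝ (Fin 2) := fun i =>
    if i = j then rotCW φj (‖e t - p j t‖⁻¹ • (e t - p j t))
    else if i = k then rotCCW φk (‖e t - p k t‖⁻¹ • (e t - p k t))
    else ‖e t - p i t‖⁻¹ • (e t - p i t) with hd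
  have hder : ∀ i, HasDerivAt (p i) (d i) t := by
    intro i
    by_cases hij : i = j
    · subst hij; simpa [hd] using hpj
    · by_cases hik : i = k
      · subst hik; simpa [hd, hij] using hpk
      · simpa [hd, hij, hik] using hothers i hij hik
  set D : Fin n → ℝ := fun i => (inner ℝ (q i) (d i - e') : ℝ) / r i with hD
  have hV : HasDerivAt (fun s => ∑ i, ‖p i s - e s‖) (∑ i, D i) t := by
    apply HasDerivAt.fun_sum
    intro i _
    exact hasDerivAt_norm_aux ((hder i).sub he) (hq0 i)
  refine ⟨∑ i, D i, hV, ?_⟩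
  -- rewrite each argument of rot as a scalar multiple of q
  have harg : ∀ i, ‖e t - p i t‖⁻¹ • (e t - p i t) = (-(r i)⁻¹) • q i := by
    intro i
    rw [hrevn i, show e t - p i t = -(q i) by simp [hq]]
    rw [smul_neg, ← neg_smul]
  -- evaluate D j, D k
  have hDj : D j = -Real.cos φj - (inner ℝ (q j) e' : ℝ) / r j := by
    have : d j = rotCW φj ((-(r j)⁻¹) • q j) := by simp [hd, harg j]
    rw [hD]; simp only [this, inner_sub_right, inner_rotCW, hqq]
    have := (hr j).ne'
    field_simp
  have hDk : D k = -Real.cos φk - (inner ℝ (q k) e' : ℝ) / r k := by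
    have : d k = rotCCW φk ((-(r k)⁻¹) • q k) := by
      simp [hd, Ne.symm hjk, harg k]
    rw [hD]; simp only [this, inner_sub_right, inner_rotCCW, hqq]
    have := (hr k).ne'
    field_simp
  -- cancellation of evader terms for j,k
  have hcancel : (inner ℝ (q j) e' : ℝ) / r j + (inner ℝ (q k) e' : ℝ) / r k = 0 := by
    set w : EuclideanSpace ℝ (Fin 2) := p k t - p j t with hw
    have hwne : w ≠ 0 := sub_ne_zero.2 (Ne.symm hpjk)
    have hwn : (0:ℝ) < ‖w‖ := norm_pos_iff.2 hwne
    have hqj : q j = (-lam) • w := by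
      rw [hq]; simp only [heEdge]; rw [neg_smul]; abel
    have hqk : q k = (1 - lam) • w := by
      rw [hq]; simp only [heEdge]
      rw [sub_smul, one_smul, hw]; abel
    have hrj : r j = lam * ‖w‖ := by
      rw [hrdef]; simp only [hqj, norm_smul, Real.norm_eq_abs, abs_neg,
        abs_of_pos hl0]
    have hrk : r k = (1 - lam) * ‖w‖ := by
      rw [hrdef]; simp only [hqk, norm_smul, Real.norm_eq_abs,
        abs_of_pos (by linarith : (0:ℝ) < 1 - lam)]
    rw [hqj, hqk, real_inner_smul_left, real_inner_smul_left, hrj, hrk]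
    set X : ℝ := inner ℝ w e' with hX
    have h1 : -lam * X / (lam * ‖w‖) = -(X / ‖w‖) := by
      rw [neg_mul, neg_div, mul_div_mul_left _ _ hl0.ne']
    have h2 : (1 - lam) * X / ((1 - lam) * ‖w‖) = X / ‖w‖ := by
      rw [mul_div_mul_left _ _ (by linarith : (1:ℝ) - lam ≠ 0)]
    rw [h1, h2]; ring
  -- split the sum
  have hkmem : k ∈ Finset.univ.erase j := Finset.mem_erase.2 ⟨Ne.symm hjk, Finset.mem_univ k⟩
  have hsplit : ∑ i, D i = D j + (D k + ∑ i ∈ (Finset.univ.erase j).erase k, D i) := by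
    rw [Finset.add_sum_erase _ D hkmem, Finset.add_sum_erase _ D (Finset.mem_univ j)]
  have hcard : ((Finset.univ.erase j).erase k).card = n - 2 := by
    rw [Finset.card_erase_of_mem hkmem, Finset.card_erase_of_mem (Finset.mem_univ j),
      Finset.card_univ, Fintype.card_fin]
    omega
  -- bound pure pursuit terms
  have hpure : ∀ i ∈ (Finset.univ.erase j).erase k, D i ≤ -(1 - μm) := by
    intro i hi
    obtain ⟨hik, hi'⟩ := Finset.mem_erase.1 hi
    obtain ⟨hij, _⟩ := Finset.mem_erase.1 hi'
    have hdi : d i = (-(r i)⁻¹) • q i := by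
      rw [hd]; simp only [if_neg hij, if_neg hik]; exact harg i
    have hDi : D i = -1 - (inner ℝ (q i) e' : ℝ) / r i := by
      rw [hD]; simp only [hdi, inner_sub_right, real_inner_smul_right, hqq]
      have := (hr i).ne'
      field_simp
    have hCS : -(inner ℝ (q i) e' : ℝ) ≤ r i * μm := by
      have h1 : (inner ℝ (q i) (-e') : ℝ) ≤ ‖q i‖ * ‖-e'‖ := real_inner_le_norm _ _
      rw [inner_neg_right, norm_neg] at h1
      calc -(inner ℝ (q i) e' : ℝ) ≤ ‖q i‖ * ‖e'‖ := h1
        _ ≤ r i * μm := by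
            apply mul_le_mul_of_nonneg_left hbound (norm_nonneg _)
    have : -((inner ℝ (q i) e' : ℝ) / r i) ≤ μm := by
      rw [← neg_div, div_le_iff₀ (hr i)]
      calc -(inner ℝ (q i) e' : ℝ) ≤ r i * μm := hCS
        _ = μm * r i := by ring
    rw [hDi]; linarith
  have hsum : ∑ i ∈ (Finset.univ.erase j).erase k, D i ≤ (n - 2 : ℕ) * (-(1 - μm)) := by
    have := Finset.sum_le_card_nsmul _ D (-(1 - μm)) hpure
    rwa [hcard, nsmul_eq_mul] at this
  have hcj : 1 - μm ≤ Real.cos φj := cos_lb hμ0 hμ1 hφj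
  have hck : 1 - μm ≤ Real.cos φk := cos_lb hμ0 hμ1 hφk
  have hcast : ((n - 2 : ℕ) : ℝ) = (n : ℝ) - 2 := by
    rw [Nat.cast_sub (by omega)]; norm_num
  rw [hsplit]
  have hjk2 : D j + D k = -(Real.cos φj + Real.cos φk) := by
    rw [hDj, hDk]; linarith [hcancel]
  have : D j + (D k + ∑ i ∈ (Finset.univ.erase j).erase k, D i)
      ≤ -(Real.cos φj + Real.cos φk) + ((n : ℝ) - 2) * (-(1 - μm)) := by
    rw [hcast] at hsum
    linarith [hjk2]
  calc D j + (D k + ∑ i ∈ (Finset.univ.erase j).erase k, D i)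
      ≤ -(Real.cos φj + Real.cos φk) + ((n : ℝ) - 2) * (-(1 - μm)) := this
    _ ≤ -(n * (1 - μm)) := by nlinarith [hcj, hck]

end
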